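/- Fix d ≥ 2, 𝗊 ≥ 3, N ≥ 1, T > 0, ε ≥ 0. Let σ ∈ {𝟣,…,𝗊}^{Λ_N} with σ_o = 𝟤, and let 𝒜_σ ⊂ Λ_N be the simply connected component enclosed by the outermost boundary of the connected component of spin-𝟤 vertices containing the origin. Then the joint density ν^𝟣 under ℚ^𝟣 satisfies ν^𝟣(h,σ) / ( Σ_{𝗃=𝟣}^{𝗊−𝟣} ν^𝟣(h^{𝒜_σ,𝗃}, σ^{𝒜_σ,𝗃}) ) ≤ e^{−|∂𝒜_σ|/((𝗊−𝟣)T)} · sup_{𝟣 ≤ 𝗃 ≤ 𝗊−𝟣} ( Z^𝟣(h^{𝒜_σ,𝗃}) / Z^𝟣(h) ). This uses the identity Σ_{𝗃=𝟣}^{𝗊−𝟣} Σ_{(u,v)∈∂𝒜_σ} 1_{σ^{𝒜_σ,𝗃}_u = σ_v} = |∂𝒜_σ|. -/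

import Mathlib

open MeasureTheory ProbabilityTheory Real

namespace RFIM

/-- the lattice `ℤ^d`. -/
abbrev V (d : ℕ) := Fin d → ℤ

/-- `u ∼ v` iff their `ℓ¹`-distance is `1`. -/
def adj {d : ℕ} (u v : V d) : Prop := (∑ i, |u i - v i|) = 1

instance {d : ℕ} (u v : V d) : Decidable (adj u v) := by
  unfold adj; infer_instance

/-- the nearest-neighbor graph on `ℤ^d`. -/
def latticeGraph (d : ℕ) : SimpleGraph (V d) where
  Adj u v := adj u v
  symm := by
    constructor
    intro u v h
    unfold adj at h ⊢
    rw [← h]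
    exact Finset.sum_congr rfl fun i _ => abs_sub_comm _ _
  loopless := by
    constructor
    intro u h
    unfold adj at h
    simp at h

/-- the box `Λ_N = [-N,N]^d ∩ ℤ^d`. -/
noncomputable def box (d N : ℕ) : Finset (V d) :=
  Finset.Icc (fun _ => -(N : ℤ)) (fun _ => (N : ℤ))

/-- the number of neighbors of `u` lying outside `Λ`. -/
noncomputable def nbrOut {d : ℕ} (Λ : Finset (V d)) (u : V d) : ℕ :=
  ((Finset.Icc (u - 1) (u + 1)).filter fun v => adj u v ∧ v ∉ Λ).card

/-- the size `|∂A|` of the edge boundary `∂A = {(u,v) : u ∼ v, u ∈ A, v ∉ A}`. -/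
noncomputable def bdry {d : ℕ} (A : Finset (V d)) : ℕ :=
  ∑ u ∈ A, ((Finset.Icc (u - 1) (u + 1)).filter fun v => adj u v ∧ v ∉ A).card

/-- the spin value `±1` attached to a Boolean. -/
noncomputable def spin (b : Bool) : ℝ := if b then 1 else -1

/-- a configuration on `Λ`, extended by `+1` (i.e. `true`) outside `Λ`. -/
def extCfg {d : ℕ} (Λ : Finset (V d)) (σ : Λ → Bool) : V d → Bool :=
  fun v => if h : v ∈ Λ then σ ⟨v, h⟩ else true

/-- the RFIM Hamiltonian `H^{η,Λ,εh}(σ)` on `Λ`, with boundary condition `η = ±1` and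
external field `ε h`.  (The interior sum is over ordered pairs, whence the factor `1/2`.) -/
noncomputable def ham {d : ℕ} (Λ : Finset (V d)) (η ε : ℝ) (h : V d → ℝ) (σ : Λ → Bool) : ℝ :=
  -((1/2) * ∑ u ∈ Λ, ∑ v ∈ Λ.filter (fun v => adj u v), spin (extCfg Λ σ u) * spin (extCfg Λ σ v)
    + η * ∑ u ∈ Λ, (nbrOut Λ u : ℝ) * spin (extCfg Λ σ u)
    + ∑ u ∈ Λ, ε * h u * spin (extCfg Λ σ u))

/-- the partition function `Z^η_{T,Λ}(εh)`. -/
noncomputable def Zf {d : ℕ} (Λ : Finset (V d)) (η T ε : ℝ) (h : V d → ℝ) : ℝ :=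
  ∑ σ : Λ → Bool, exp (-(ham Λ η ε h σ) / T)

open Classical in
/-- the Gibbs probability `μ^η_{T,Λ,εh}(p)` of an event `p`. -/
noncomputable def gibbsProb {d : ℕ} (Λ : Finset (V d)) (η T ε : ℝ) (h : V d → ℝ)
    (p : (Λ → Bool) → Prop) : ℝ :=
  (∑ σ : Λ → Bool, if p σ then exp (-(ham Λ η ε h σ) / T) else 0) / Zf Λ η T ε h

/-- the Gibbs expectation `⟨f⟩_{μ^η_{T,Λ,εh}}`. -/
noncomputable def gibbsExp {d : ℕ} (Λ : Finset (V d)) (η T ε : ℝ) (h : V d → ℝ)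
    (f : (Λ → Bool) → ℝ) : ℝ :=
  (∑ σ : Λ → Bool, f σ * exp (-(ham Λ η ε h σ) / T)) / Zf Λ η T ε h

/-- the field `h^A`, with the sign of `h` flipped exactly on `A`. -/
def flipField {d : ℕ} (A : Finset (V d)) (h : V d → ℝ) : V d → ℝ :=
  fun v => if v ∈ A then -h v else h v

/-- the configuration `σ^A`, with spins flipped exactly on `A`. -/
def flipCfg {d : ℕ} (A : Finset (V d)) {Λ : Finset (V d)} (σ : Λ → Bool) : Λ → Bool :=
  fun v => if (v : V d) ∈ A then !(σ v) else σ v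

/-- the free energy difference `Δ_A(h) = -T log Z⁺(h) + T log Z⁺(h^A)`. -/
noncomputable def Δ {d : ℕ} (Λ : Finset (V d)) (T ε : ℝ) (A : Finset (V d)) (h : V d → ℝ) : ℝ :=
  -T * log (Zf Λ 1 T ε h) + T * log (Zf Λ 1 T ε (flipField A h))

/-- the law of an i.i.d. standard Gaussian field indexed by `S`. -/
noncomputable def gaussField {d : ℕ} (S : Finset (V d)) : Measure (S → ℝ) :=
  Measure.pi fun _ => gaussianReal 0 1

/-- the field on `ℤ^d` equal to `ω` on `S` and to `g` off `S`. -/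
def fieldFrom {d : ℕ} (S : Finset (V d)) (g : V d → ℝ) (ω : S → ℝ) : V d → ℝ :=
  fun v => if h : v ∈ S then ω ⟨v, h⟩ else g v

/-- `A` is simply connected: both `A` and its complement induce connected subgraphs. -/
def SimplyConnected {d : ℕ} (A : Finset (V d)) : Prop :=
  ((latticeGraph d).induce (A : Set (V d))).Connected ∧
  ((latticeGraph d).induce ((A : Set (V d))ᶜ)).Connected

/-- the collection `𝔄` of simply connected subsets of `Λ_N` containing the origin. -/
def goodSets (d N : ℕ) : Set (Finset (V d)) :=
  {A | A ⊆ box d N ∧ (0 : V d) ∈ A ∧ SimplyConnected A}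

/-- a Potts configuration on `Λ`, extended by the boundary state `k1` outside `Λ`. -/
def pExt {d q : ℕ} (Λ : Finset (V d)) (k1 : Fin q) (σ : Λ → Fin q) : V d → Fin q :=
  fun v => if h : v ∈ Λ then σ ⟨v, h⟩ else k1

/-- the RFPM Hamiltonian `H^{k1,Λ,εh}(σ)` with boundary condition `k1` and fields `ε h_{k,·}`.
(The interior sum is over ordered pairs, whence the factor `1/2`.) -/
noncomputable def pHam {d q : ℕ} (Λ : Finset (V d)) (k1 : Fin q) (ε : ℝ)
    (h : Fin q → V d → ℝ) (σ : Λ → Fin q) : ℝ :=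
  -((1/2) * ∑ u ∈ Λ, ∑ v ∈ Λ.filter (fun v => adj u v),
      (if pExt Λ k1 σ u = pExt Λ k1 σ v then (1:ℝ) else 0)
    + ∑ u ∈ Λ, (nbrOut Λ u : ℝ) * (if pExt Λ k1 σ u = k1 then (1:ℝ) else 0)
    + ∑ u ∈ Λ, ε * h (pExt Λ k1 σ u) u)

/-- the Potts partition function `Z^{k1}_{T,Λ}(εh)`. -/
noncomputable def pZ {d q : ℕ} (Λ : Finset (V d)) (k1 : Fin q) (T ε : ℝ)
    (h : Fin q → V d → ℝ) : ℝ :=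
  ∑ σ : Λ → Fin q, exp (-(pHam Λ k1 ε h σ) / T)

open Classical in
/-- the Potts Gibbs probability `μ^{k1}_{T,Λ,εh}(p)` of an event `p`. -/
noncomputable def pGibbsProb {d q : ℕ} (Λ : Finset (V d)) (k1 : Fin q) (T ε : ℝ)
    (h : Fin q → V d → ℝ) (p : (Λ → Fin q) → Prop) : ℝ :=
  (∑ σ : Λ → Fin q, if p σ then exp (-(pHam Λ k1 ε h σ) / T) else 0) / pZ Λ k1 T ε h

/-- the rotated field `h^{A,j}`: on `A`, `h^{A,j}_{k,v} = h_{θ^{-j}(k),v} = h_{k+j,v}`,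
where `θ(k) = k - 1` is the cyclic rotation. -/
def rotField {d q : ℕ} (A : Finset (V d)) (j : Fin q) (h : Fin q → V d → ℝ) :
    Fin q → V d → ℝ :=
  fun k v => if v ∈ A then h (k + j) v else h k v

/-- the rotated configuration `σ^{A,j}`: on `A`, `σ^{A,j}_v = θ^j(σ_v) = σ_v - j`. -/
def rotCfg {d q : ℕ} (A : Finset (V d)) (j : Fin q) {Λ : Finset (V d)} (σ : Λ → Fin q) :
    Λ → Fin q :=
  fun v => if (v : V d) ∈ A then σ v - j else σ v

/-- the Potts free energy difference `Δ_{A,j}(h) = -T log Z¹(h) + T log Z¹(h^{A,j})`. -/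
noncomputable def pΔ {d q : ℕ} (Λ : Finset (V d)) (k1 : Fin q) (T ε : ℝ)
    (A : Finset (V d)) (j : Fin q) (h : Fin q → V d → ℝ) : ℝ :=
  -T * log (pZ Λ k1 T ε h) + T * log (pZ Λ k1 T ε (rotField A j h))

/-- the law of i.i.d. standard Gaussian fields `(h_{k,v})` indexed by `Fin q × S`. -/
noncomputable def pGaussField {d : ℕ} (q : ℕ) (S : Finset (V d)) :
    Measure (Fin q × S → ℝ) :=
  Measure.pi fun _ => gaussianReal 0 1

/-- the fields on `ℤ^d` equal to `ω` on `S` and to `g` off `S`. -/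
def pFieldFrom {d : ℕ} (q : ℕ) (S : Finset (V d)) (g : Fin q → V d → ℝ)
    (ω : Fin q × S → ℝ) : Fin q → V d → ℝ :=
  fun k v => if h : v ∈ S then ω (k, ⟨v, h⟩) else g k v

/-- the joint density `ν^{k1}(h,σ)` of field and spins under `ℚ^{k1}`. -/
noncomputable def pNu {d q : ℕ} (Λ : Finset (V d)) (k1 : Fin q) (T ε : ℝ)
    (h : Fin q → V d → ℝ) (σ : Λ → Fin q) : ℝ :=
  (∏ u ∈ Λ, ∏ i : Fin q, (1 / Real.sqrt (2 * π)) * exp (-(h i u)^2 / 2)) *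
    exp (-(pHam Λ k1 ε h σ) / T) / pZ Λ k1 T ε h

section Helpers
variable {d q : ℕ}

lemma adj_comm' (u v : V d) : adj u v ↔ adj v u :=
  ⟨fun h => (latticeGraph d).adj_symm h, fun h => (latticeGraph d).adj_symm h⟩

lemma adj_mem_Icc {u v : V d} (h : adj u v) : v ∈ Finset.Icc (u - 1) (u + 1) := by
  have hle : ∀ i, |u i - v i| ≤ 1 := by
    intro i
    calc |u i - v i| ≤ ∑ k, |u k - v k| :=
          Finset.single_le_sum (f := fun k => |u k - v k|) (fun k _ => abs_nonneg _) (Finset.mem_univ i)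
      _ = 1 := h
  rw [Finset.mem_Icc]
  constructor <;> intro i <;> have := abs_le.mp (hle i) <;>
    simp only [Pi.sub_apply, Pi.add_apply, Pi.one_apply] <;> omega

lemma sum_pairs_comm (Λ : Finset (V d)) (F : V d → V d → ℝ) :
    ∑ u ∈ Λ, ∑ v ∈ Λ.filter (fun v => adj u v), F u v
      = ∑ u ∈ Λ, ∑ v ∈ Λ.filter (fun v => adj u v), F v u := by
  simp only [Finset.sum_filter]
  rw [Finset.sum_comm]
  exact Finset.sum_congr rfl fun u _ => Finset.sum_congr rfl fun v _ =>
    if_congr (adj_comm' v u) rfl rfl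

lemma pZ_pos (Λ : Finset (V d)) (k1 : Fin q) (T ε : ℝ) (h : Fin q → V d → ℝ) :
    0 < pZ Λ k1 T ε h := by
  refine Finset.sum_pos (fun σ _ => Real.exp_pos _) ⟨fun _ => k1, Finset.mem_univ _⟩

lemma gauss_pos (Λ : Finset (V d)) (h : Fin q → V d → ℝ) :
    0 < ∏ u ∈ Λ, ∏ i : Fin q, (1 / Real.sqrt (2 * π)) * exp (-(h i u)^2 / 2) := by
  refine Finset.prod_pos fun u _ => Finset.prod_pos fun i _ => by positivity

lemma bdry_count (Λ A : Finset (V d)) (hAΛ : A ⊆ Λ) (u : V d) :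
    ((Finset.Icc (u - 1) (u + 1)).filter fun v => adj u v ∧ v ∉ A).card
      = (Λ.filter fun v => adj u v ∧ v ∉ A).card + nbrOut Λ u := by
  classical
  have key := Finset.card_filter_add_card_filter_not
    (s := (Finset.Icc (u - 1) (u + 1)).filter fun v => adj u v ∧ v ∉ A)
    (p := fun v => v ∈ Λ)
  rw [← key]
  congr 1
  · congr 1
    ext v
    simp only [Finset.mem_filter, Finset.mem_Icc]
    constructor
    · rintro ⟨⟨_, ha, hna⟩, hl⟩; exact ⟨hl, ha, hna⟩
    · rintro ⟨hl, ha, hna⟩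
      exact ⟨⟨Finset.mem_Icc.mp (adj_mem_Icc ha), ha, hna⟩, hl⟩
  · unfold nbrOut
    congr 1
    ext v
    simp only [Finset.mem_filter]
    constructor
    · rintro ⟨⟨hi, ha, _⟩, hl⟩; exact ⟨hi, ha, hl⟩
    · rintro ⟨hi, ha, hl⟩; exact ⟨⟨hi, ha, fun hA => hl (hAΛ hA)⟩, hl⟩

end Helpers

section Rot
variable {d q : ℕ} [NeZero q]

lemma sum_ind {a b : Fin q} (hab : a ≠ b) :
    ∑ j ∈ Finset.univ.filter (fun j : Fin q => j ≠ 0),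
      (if a - j = b then (1:ℝ) else 0) = 1 := by
  classical
  have key : ∀ j : Fin q, (a - j = b) = (j = a - b) := by
    intro j
    apply propext
    constructor
    · intro hh; rw [← hh]; rw [sub_sub_cancel]
    · intro hh; rw [hh, sub_sub_cancel]
  simp only [key]
  rw [Finset.sum_ite_eq' (Finset.univ.filter (fun j : Fin q => j ≠ 0)) (a - b) (fun _ => (1:ℝ))]
  rw [if_pos]
  simp only [Finset.mem_filter, Finset.mem_univ, true_and]
  exact sub_ne_zero.mpr hab

lemma gauss_rot (Λ A : Finset (V d)) (h : Fin q → V d → ℝ) (j : Fin q) :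
    ∏ u ∈ Λ, ∏ i : Fin q, (1 / Real.sqrt (2 * π)) * exp (-(rotField A j h i u)^2 / 2)
      = ∏ u ∈ Λ, ∏ i : Fin q, (1 / Real.sqrt (2 * π)) * exp (-(h i u)^2 / 2) := by
  refine Finset.prod_congr rfl fun u _ => ?_
  by_cases hA : u ∈ A
  · refine Fintype.prod_equiv (Equiv.addRight j) _ _ fun i => ?_
    simp [rotField, hA, Equiv.coe_addRight]
  · exact Finset.prod_congr rfl fun i _ => by simp [rotField, hA]

/-- the collected boundary gain from rotation by `j`. -/
noncomputable def Bnd (Λ A : Finset (V d)) (σ : Λ → Fin q) (j : Fin q) : ℝ :=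
  (∑ u ∈ Λ, ∑ v ∈ Λ.filter (fun v => adj u v),
    (if u ∈ A ∧ v ∉ A then
      (if pExt Λ (0:Fin q) σ u - j = pExt Λ (0:Fin q) σ v then (1:ℝ) else 0) else 0))
  + ∑ u ∈ Λ, (if u ∈ A then
      (nbrOut Λ u : ℝ) * (if pExt Λ (0:Fin q) σ u - j = 0 then (1:ℝ) else 0) else 0)

lemma pExt_rot (Λ A : Finset (V d)) (hAΛ : A ⊆ Λ) (σ : Λ → Fin q) (j : Fin q) (v : V d) :
    pExt Λ (0:Fin q) (rotCfg A j σ) v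
      = if v ∈ A then pExt Λ (0:Fin q) σ v - j else pExt Λ (0:Fin q) σ v := by
  by_cases hv : v ∈ Λ
  · by_cases hA : v ∈ A <;> simp [pExt, rotCfg, hv, hA]
  · have hA : v ∉ A := fun hh => hv (hAΛ hh)
    simp [pExt, hv, hA]

end Rot

section Ham
variable {d q : ℕ} [NeZero q]

lemma ham_rot (Λ A : Finset (V d)) (hAΛ : A ⊆ Λ) (ε : ℝ)
    (h : Fin q → V d → ℝ) (σ : Λ → Fin q) (j : Fin q)
    (hbd : ∀ u v : V d, u ∈ A → v ∉ A → adj u v →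
      pExt Λ (0:Fin q) σ u ≠ pExt Λ (0:Fin q) σ v ∧ pExt Λ (0:Fin q) σ u ≠ 0) :
    pHam Λ (0:Fin q) ε (rotField A j h) (rotCfg A j σ)
      = pHam Λ (0:Fin q) ε h σ - Bnd Λ A σ j := by
  classical
  set τ : V d → Fin q := pExt Λ (0:Fin q) σ with hτ
  set F : V d → V d → ℝ := fun u v =>
    (if u ∈ A ∧ v ∉ A then (if τ u - j = τ v then (1:ℝ) else 0) else 0) with hF
  have hτ' : ∀ v, pExt Λ (0:Fin q) (rotCfg A j σ) v = if v ∈ A then τ v - j else τ v :=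
    pExt_rot Λ A hAΛ σ j
  -- part (a)
  have hS1 : ∑ u ∈ Λ, ∑ v ∈ Λ.filter (fun v => adj u v),
        (if pExt Λ (0:Fin q) (rotCfg A j σ) u = pExt Λ (0:Fin q) (rotCfg A j σ) v
          then (1:ℝ) else 0)
      = (∑ u ∈ Λ, ∑ v ∈ Λ.filter (fun v => adj u v), (if τ u = τ v then (1:ℝ) else 0))
        + 2 * ∑ u ∈ Λ, ∑ v ∈ Λ.filter (fun v => adj u v), F u v := by
    have step : ∀ u ∈ Λ, ∀ v ∈ Λ.filter (fun v => adj u v),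
        (if pExt Λ (0:Fin q) (rotCfg A j σ) u = pExt Λ (0:Fin q) (rotCfg A j σ) v
          then (1:ℝ) else 0)
        = (if τ u = τ v then (1:ℝ) else 0) + F u v + F v u := by
      intro u hu v hv
      obtain ⟨hvΛ, hadj⟩ := Finset.mem_filter.mp hv
      rw [hτ' u, hτ' v]
      by_cases hA : u ∈ A <;> by_cases hB : v ∈ A
      · have h1 : F u v = 0 := by simp [hF, hB]
        have h2 : F v u = 0 := by simp [hF, hA]
        rw [h1, h2, if_pos hA, if_pos hB,
          if_congr (sub_left_inj : τ u - j = τ v - j ↔ τ u = τ v) rfl rfl]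
        ring
      · have h1 : F u v = (if τ u - j = τ v then (1:ℝ) else 0) := by simp [hF, hA, hB]
        have h2 : F v u = 0 := by simp [hF, hB]
        have hne := (hbd u v hA hB hadj).1
        rw [h1, h2, if_pos hA, if_neg hB, if_neg hne]
        ring
      · have h1 : F u v = 0 := by simp [hF, hA]
        have h2 : F v u = (if τ v - j = τ u then (1:ℝ) else 0) := by simp [hF, hB, hA]
        have hne := (hbd v u hB hA ((adj_comm' u v).mp hadj)).1
        have hne2 : τ u ≠ τ v := fun hh => hne hh.symm
        rw [h1, h2, if_neg hA, if_pos hB, if_neg hne2,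
          if_congr (eq_comm : τ u = τ v - j ↔ τ v - j = τ u) rfl rfl]
        ring
      · have h1 : F u v = 0 := by simp [hF, hA]
        have h2 : F v u = 0 := by simp [hF, hB]
        rw [h1, h2, if_neg hA, if_neg hB]
        ring
    calc ∑ u ∈ Λ, ∑ v ∈ Λ.filter (fun v => adj u v),
          (if pExt Λ (0:Fin q) (rotCfg A j σ) u = pExt Λ (0:Fin q) (rotCfg A j σ) v
            then (1:ℝ) else 0)
        = ∑ u ∈ Λ, ∑ v ∈ Λ.filter (fun v => adj u v),
            ((if τ u = τ v then (1:ℝ) else 0) + F u v + F v u) :=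
          Finset.sum_congr rfl fun u hu => Finset.sum_congr rfl fun v hv => step u hu v hv
      _ = (∑ u ∈ Λ, ∑ v ∈ Λ.filter (fun v => adj u v), (if τ u = τ v then (1:ℝ) else 0))
            + (∑ u ∈ Λ, ∑ v ∈ Λ.filter (fun v => adj u v), F u v)
            + (∑ u ∈ Λ, ∑ v ∈ Λ.filter (fun v => adj u v), F v u) := by
          simp [Finset.sum_add_distrib]
      _ = _ := by
          rw [← sum_pairs_comm Λ F]; ring
  -- part (b)
  have hS2 : ∑ u ∈ Λ, (nbrOut Λ u : ℝ) *
        (if pExt Λ (0:Fin q) (rotCfg A j σ) u = 0 then (1:ℝ) else 0)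
      = (∑ u ∈ Λ, (nbrOut Λ u : ℝ) * (if τ u = 0 then (1:ℝ) else 0))
        + ∑ u ∈ Λ, (if u ∈ A then
            (nbrOut Λ u : ℝ) * (if τ u - j = 0 then (1:ℝ) else 0) else 0) := by
    rw [← Finset.sum_add_distrib]
    refine Finset.sum_congr rfl fun u hu => ?_
    rw [hτ']
    by_cases hA : u ∈ A
    · rw [if_pos hA, if_pos hA]
      rcases Nat.eq_zero_or_pos (nbrOut Λ u) with h0 | hpos
      · simp [h0]
      · obtain ⟨v, hv⟩ := Finset.card_pos.mp hpos
        obtain ⟨hvI, hadj, hvΛ⟩ := Finset.mem_filter.mp hv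
        have hvA : v ∉ A := fun hh => hvΛ (hAΛ hh)
        have hne := (hbd u v hA hvA hadj).2
        rw [if_neg hne]
        ring
    · rw [if_neg hA, if_neg hA]
      ring
  -- part (c)
  have hS3 : ∑ u ∈ Λ, ε * rotField A j h (pExt Λ (0:Fin q) (rotCfg A j σ) u) u
      = ∑ u ∈ Λ, ε * h (τ u) u := by
    refine Finset.sum_congr rfl fun u hu => ?_
    rw [hτ']
    by_cases hA : u ∈ A
    · rw [if_pos hA]
      simp [rotField, hA, sub_add_cancel]
    · rw [if_neg hA]
      simp [rotField, hA]
  unfold pHam Bnd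
  rw [hS1, hS2, hS3]
  ring

end Ham

section BndSum
variable {d q : ℕ} [NeZero q]

lemma Bnd_sum (Λ A : Finset (V d)) (hAΛ : A ⊆ Λ) (σ : Λ → Fin q)
    (hbd : ∀ u v : V d, u ∈ A → v ∉ A → adj u v →
      pExt Λ (0:Fin q) σ u ≠ pExt Λ (0:Fin q) σ v ∧ pExt Λ (0:Fin q) σ u ≠ 0) :
    ∑ j ∈ Finset.univ.filter (fun j : Fin q => j ≠ 0), Bnd Λ A σ j = (bdry A : ℝ) := by
  classical
  set τ : V d → Fin q := pExt Λ (0:Fin q) σ with hτ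
  unfold Bnd
  rw [Finset.sum_add_distrib]
  have h1 : ∑ j ∈ Finset.univ.filter (fun j : Fin q => j ≠ 0),
        ∑ u ∈ Λ, ∑ v ∈ Λ.filter (fun v => adj u v),
          (if u ∈ A ∧ v ∉ A then (if τ u - j = τ v then (1:ℝ) else 0) else 0)
      = ∑ u ∈ Λ, (if u ∈ A then ((Λ.filter (fun v => adj u v ∧ v ∉ A)).card : ℝ) else 0) := by
    rw [Finset.sum_comm]
    refine Finset.sum_congr rfl fun u hu => ?_
    rw [Finset.sum_comm]
    by_cases hA : u ∈ A
    · rw [if_pos hA]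
      have : ∀ v ∈ Λ.filter (fun v => adj u v),
          ∑ j ∈ Finset.univ.filter (fun j : Fin q => j ≠ 0),
            (if u ∈ A ∧ v ∉ A then (if τ u - j = τ v then (1:ℝ) else 0) else 0)
          = (if v ∉ A then (1:ℝ) else 0) := by
        intro v hv
        obtain ⟨hvΛ, hadj⟩ := Finset.mem_filter.mp hv
        by_cases hB : v ∈ A
        · simp [hA, hB]
        · have hne := (hbd u v hA hB hadj).1
          simp only [hA, hB, not_false_iff, and_self, if_true]
          rw [sum_ind hne]
      rw [Finset.sum_congr rfl this]
      rw [Finset.sum_boole, Finset.filter_filter]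
    · rw [if_neg hA]
      refine Finset.sum_eq_zero fun v hv => Finset.sum_eq_zero fun j hj => ?_
      simp [hA]
  have h2 : ∑ j ∈ Finset.univ.filter (fun j : Fin q => j ≠ 0),
        ∑ u ∈ Λ, (if u ∈ A then (nbrOut Λ u : ℝ) * (if τ u - j = 0 then (1:ℝ) else 0) else 0)
      = ∑ u ∈ Λ, (if u ∈ A then (nbrOut Λ u : ℝ) else 0) := by
    rw [Finset.sum_comm]
    refine Finset.sum_congr rfl fun u hu => ?_
    by_cases hA : u ∈ A
    · simp only [if_pos hA]
      rw [← Finset.mul_sum]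
      rcases Nat.eq_zero_or_pos (nbrOut Λ u) with h0 | hpos
      · simp [h0]
      · obtain ⟨v, hv⟩ := Finset.card_pos.mp hpos
        obtain ⟨hvI, hadj, hvΛ⟩ := Finset.mem_filter.mp hv
        have hvA : v ∉ A := fun hh => hvΛ (hAΛ hh)
        have hne := (hbd u v hA hvA hadj).2
        rw [sum_ind hne, mul_one]
    · simp [hA]
  rw [h1, h2, ← Finset.sum_add_distrib]
  have h3 : ∀ u ∈ Λ,
      (if u ∈ A then ((Λ.filter (fun v => adj u v ∧ v ∉ A)).card : ℝ) else 0)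
        + (if u ∈ A then (nbrOut Λ u : ℝ) else 0)
      = (if u ∈ A then
          (((Finset.Icc (u - 1) (u + 1)).filter fun v => adj u v ∧ v ∉ A).card : ℝ) else 0) := by
    intro u hu
    by_cases hA : u ∈ A
    · simp only [if_pos hA]
      rw [bdry_count Λ A hAΛ u]
      push_cast
      ring
    · simp [hA]
  rw [Finset.sum_congr rfl h3]
  rw [← Finset.sum_filter]
  have h4 : Λ.filter (fun u => u ∈ A) = A := by
    rw [Finset.filter_mem_eq_inter]
    exact Finset.inter_eq_right.mpr hAΛ
  rw [h4]
  unfold bdry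
  push_cast
  rfl

end BndSum

lemma main_calc {ι : Type*} (s : Finset ι) (hs : s.Nonempty)
    (G E Z M c T : ℝ) (B Zj : ι → ℝ)
    (hG : 0 < G) (hE : 0 < E) (hZ : 0 < Z) (hT : 0 < T)
    (hZj : ∀ j ∈ s, 0 < Zj j) (hMle : ∀ j ∈ s, Zj j / Z ≤ M)
    (hsum : (s.card : ℝ) * c ≤ ∑ j ∈ s, B j) :
    G * E / Z / (∑ j ∈ s, G * (E * exp (B j / T)) / Zj j) ≤ exp (-c / T) * M := by
  obtain ⟨js, hjs, hcB⟩ : ∃ j ∈ s, c ≤ B j := by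
    apply Finset.exists_le_of_sum_le hs
    rw [Finset.sum_const, nsmul_eq_mul]
    exact hsum
  have hM0 : 0 < M := lt_of_lt_of_le (div_pos (hZj js hjs) hZ) (hMle js hjs)
  have hlow : G * (E * exp (c / T)) / (M * Z) ≤ G * (E * exp (B js / T)) / Zj js := by
    have h1 : G * (E * exp (c / T)) ≤ G * (E * exp (B js / T)) := by
      have he : exp (c / T) ≤ exp (B js / T) :=
        Real.exp_le_exp.mpr ((div_le_div_iff_of_pos_right hT).mpr hcB)
      exact mul_le_mul_of_nonneg_left (mul_le_mul_of_nonneg_left he hE.le) hG.le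
    have h2 : Zj js ≤ M * Z := (div_le_iff₀ hZ).mp (hMle js hjs)
    exact div_le_div₀ (by positivity) h1 (hZj js hjs) h2
  have hD : G * (E * exp (c / T)) / (M * Z)
      ≤ ∑ j ∈ s, G * (E * exp (B j / T)) / Zj j := by
    refine le_trans hlow (Finset.single_le_sum (f := fun j => G * (E * exp (B j / T)) / Zj j) (fun j hj => ?_) hjs)
    exact div_nonneg (by positivity) (hZj j hj).le
  have hDpos : 0 < ∑ j ∈ s, G * (E * exp (B j / T)) / Zj j :=
    lt_of_lt_of_le (by positivity) hD
  rw [div_le_iff₀ hDpos]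
  have hexp : exp (-c / T) * exp (c / T) = 1 := by
    rw [← Real.exp_add]
    rw [show -c / T + c / T = 0 by ring]
    exact Real.exp_zero
  calc G * E / Z = (exp (-c / T) * M) * (G * (E * exp (c / T)) / (M * Z)) := by
        rw [show (exp (-c / T) * M) * (G * (E * exp (c / T)) / (M * Z))
            = (exp (-c / T) * exp (c / T)) * ((M / M) * (G * E / Z)) by field_simp]
        rw [hexp, div_self hM0.ne', one_mul, one_mul]
    _ ≤ (exp (-c / T) * M) * (∑ j ∈ s, G * (E * exp (B j / T)) / Zj j) :=
        mul_le_mul_of_nonneg_left hD (by positivity)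
/-- **The key density inequality for the Potts Peierls map.**  If `σ_o = 𝟤` and
`A = 𝒜_σ` is the simply connected component enclosed by the outermost boundary of the
spin-`𝟤` component of the origin — so that `A ∈ 𝔄` and every boundary edge
`(u,v) ∈ ∂A` has `σ_u = 𝟤` and `σ_v ≠ 𝟤` (with `σ ≡ 𝟣` off `Λ_N`) — then
`ν¹(h,σ) / Σ_{j=𝟣}^{𝗊-𝟣} ν¹(h^{A,j},σ^{A,j}) ≤ e^{-|∂A|/((q-1)T)} · sup_j Z¹(h^{A,j})/Z¹(h)`.
(States: `𝟣 = 0`, `𝟤 = 1` in `Fin q`; the rotation amounts `𝟣,…,𝗊-𝟣` are `j ≠ 0`.) -/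
theorem rfpm_density_inequality (d q N : ℕ) (hd : 2 ≤ d) (hq : 3 ≤ q) (hN : 1 ≤ N)
    (T ε : ℝ) (hT : 0 < T) (hε : 0 ≤ ε)
    (h : Fin q → V d → ℝ) (σ : box d N → Fin q)
    (hσo : pExt (box d N) (⟨0, by omega⟩ : Fin q) σ 0 = ⟨1, by omega⟩)
    (A : Finset (V d)) (hA : A ∈ goodSets d N)
    (hbd : ∀ u v : V d, u ∈ A → v ∉ A → adj u v →
      pExt (box d N) (⟨0, by omega⟩ : Fin q) σ u = ⟨1, by omega⟩ ∧
      pExt (box d N) (⟨0, by omega⟩ : Fin q) σ v ≠ ⟨1, by omega⟩) :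
    pNu (box d N) (⟨0, by omega⟩ : Fin q) T ε h σ /
        (∑ j ∈ Finset.univ.filter (fun j : Fin q => j ≠ ⟨0, by omega⟩),
          pNu (box d N) (⟨0, by omega⟩ : Fin q) T ε (rotField A j h) (rotCfg A j σ)) ≤
      exp (-(bdry A : ℝ) / (((q:ℝ) - 1) * T)) *
        ⨆ j : {j : Fin q // j ≠ ⟨0, by omega⟩},
          pZ (box d N) (⟨0, by omega⟩ : Fin q) T ε (rotField A (j : Fin q) h) /
            pZ (box d N) (⟨0, by omega⟩ : Fin q) T ε h := by
  classical
  haveI : NeZero q := ⟨by omega⟩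
  have h0 : (⟨0, by omega⟩ : Fin q) = 0 := by
    apply Fin.ext
    simp
  rw [h0] at hbd ⊢
  obtain ⟨hAΛ, hA0, hASC⟩ := hA
  have hbd' : ∀ u v : V d, u ∈ A → v ∉ A → adj u v →
      pExt (box d N) (0:Fin q) σ u ≠ pExt (box d N) (0:Fin q) σ v ∧
      pExt (box d N) (0:Fin q) σ u ≠ 0 := by
    intro u v hu hv huv
    obtain ⟨e1, e2⟩ := hbd u v hu hv huv
    have hne10 : (⟨1, by omega⟩ : Fin q) ≠ 0 := by simp [Fin.ext_iff]
    refine ⟨?_, by rw [e1]; exact hne10⟩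
    rw [e1]
    exact fun hh => e2 hh.symm
  set filt := Finset.univ.filter (fun j : Fin q => j ≠ (0:Fin q)) with hfilt
  set G := ∏ u ∈ (box d N), ∏ i : Fin q, (1 / Real.sqrt (2 * π)) * exp (-(h i u)^2 / 2) with hGdef
  set E := exp (-(pHam (box d N) (0:Fin q) ε h σ) / T) with hEdef
  set Z := pZ (box d N) (0:Fin q) T ε h with hZdef
  have hG : 0 < G := gauss_pos (box d N) h
  have hE : 0 < E := Real.exp_pos _
  have hZ : 0 < Z := pZ_pos (box d N) (0:Fin q) T ε h
  have hq1 : ((q:ℝ) - 1) ≠ 0 := by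
    have : (3:ℝ) ≤ (q:ℝ) := by exact_mod_cast hq
    linarith
  have hnum : pNu (box d N) (0:Fin q) T ε h σ = G * E / Z := rfl
  have hden : ∀ j : Fin q, pNu (box d N) (0:Fin q) T ε (rotField A j h) (rotCfg A j σ)
      = G * (E * exp (Bnd (box d N) A σ j / T)) / pZ (box d N) (0:Fin q) T ε (rotField A j h) := by
    intro j
    unfold pNu
    rw [gauss_rot (box d N) A h j, ham_rot (box d N) A hAΛ ε h σ j hbd']
    rw [show -(pHam (box d N) (0:Fin q) ε h σ - Bnd (box d N) A σ j) / T
        = -(pHam (box d N) (0:Fin q) ε h σ) / T + Bnd (box d N) A σ j / T by ring, Real.exp_add]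
  rw [hnum, Finset.sum_congr rfl (fun j _ => hden j)]
  set M := ⨆ j : {j : Fin q // j ≠ (0:Fin q)},
      pZ (box d N) (0:Fin q) T ε (rotField A (j : Fin q) h) / Z with hMdef
  rw [show (-(bdry A : ℝ)) / (((q:ℝ) - 1) * T)
      = -((bdry A : ℝ) / ((q:ℝ) - 1)) / T by rw [neg_div, neg_div, div_div]]
  apply main_calc filt ⟨⟨1, by omega⟩, Finset.mem_filter.mpr ⟨Finset.mem_univ _,
      by simp [Fin.ext_iff]⟩⟩ G E Z M ((bdry A : ℝ) / ((q:ℝ) - 1)) T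
      (Bnd (box d N) A σ) (fun j => pZ (box d N) (0:Fin q) T ε (rotField A j h)) hG hE hZ hT
  · exact fun j _ => pZ_pos (box d N) (0:Fin q) T ε (rotField A j h)
  · intro j hj
    have hjne : j ≠ (0:Fin q) := (Finset.mem_filter.mp hj).2
    exact le_ciSup (f := fun j : {j : Fin q // j ≠ (0:Fin q)} =>
        pZ (box d N) (0:Fin q) T ε (rotField A (j : Fin q) h) / Z)
      (Set.Finite.bddAbove (Set.finite_range _)) (⟨j, hjne⟩ : {j : Fin q // j ≠ (0:Fin q)})
  · have hcard : (filt.card : ℝ) = (q:ℝ) - 1 := by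
      rw [hfilt, Finset.filter_ne', Finset.card_erase_of_mem (Finset.mem_univ _)]
      rw [Finset.card_univ, Fintype.card_fin]
      rw [Nat.cast_sub (by omega), Nat.cast_one]
    rw [hcard, Bnd_sum (box d N) A hAΛ σ hbd']
    rw [mul_div_cancel₀ _ hq1]
end RFIM
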